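/- If G_L is connected, then for every routing M the set of physical links whose individual failure disconnects the logical network equals the set of physical links shared by the utilized link sets of all spanning trees; that is, R(M) = ⋂_{τ} E_P(τ,M), where the intersection ranges over all spanning trees τ of G_L. (Paper's Lemma 2.) -/

import Mathlib

/-- A spanning tree of the logical network `G`: a simple graph on the same vertex
set that is a subgraph of `G`, connected, and acyclic. -/
def IsSpanningTree {V_L : Type*} (G τ : SimpleGraph V_L) : Prop :=
  τ ≤ G ∧ τ.Connected ∧ τ.IsAcyclic

/-- The surviving graph `G∖e` after failure of the physical link `e`, under routing `M`. -/
def survivingGraph {V_L E_P : Type*} (G : SimpleGraph V_L) (M : Sym2 V_L → Set E_P)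
    (e : E_P) : SimpleGraph V_L :=
  SimpleGraph.fromEdgeSet {μ | μ ∈ G.edgeSet ∧ e ∉ M μ}

/-- `E_P(τ,M)`: the physical links utilized by the routing of the branches of `τ`. -/
def utilizedLinks {V_L E_P : Type*} (M : Sym2 V_L → Set E_P) (τ : SimpleGraph V_L) :
    Set E_P :=
  ⋃ μ ∈ τ.edgeSet, M μ

/-- `R(M)`: the physical links whose individual failure disconnects the logical network. -/
def disconnectingLinks {V_L E_P : Type*} (G : SimpleGraph V_L)
    (M : Sym2 V_L → Set E_P) : Set E_P :=
  {e | ¬ (survivingGraph G M e).Connected}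

/-- Deleting a non-bridge edge of a connected graph keeps it connected. -/
lemma connected_deleteEdges_of_reachable {V : Type*} {H : SimpleGraph V} {u v : V}
    (h : H.Connected)
    (hr : (H.deleteEdges {s(u, v)}).Reachable u v) :
    (H.deleteEdges {s(u, v)}).Connected := by
  have key : ∀ {a b : V}, H.Walk a b → (H.deleteEdges {s(u, v)}).Reachable a b := by
    intro a b p
    induction p with
    | nil => exact SimpleGraph.Reachable.refl _
    | cons hadj p ih =>
      rename_i x y z
      refine SimpleGraph.Reachable.trans ?_ ih
      by_cases he : s(x, y) = s(u, v)
      · rw [Sym2.eq_iff] at he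
        rcases he with ⟨rfl, rfl⟩ | ⟨rfl, rfl⟩
        · exact hr
        · exact hr.symm
      · exact SimpleGraph.Adj.reachable (by
          rw [SimpleGraph.deleteEdges_adj]
          exact ⟨hadj, by simpa using he⟩)
  haveI : Nonempty V := h.nonempty
  refine ⟨fun a b => ?_⟩
  obtain ⟨p⟩ := h.preconnected a b
  exact key p

/-- Every connected graph on a finite vertex type has a spanning tree. -/
lemma exists_spanning_tree_aux {V : Type*} [Fintype V] :
    ∀ (n : ℕ) (H : SimpleGraph V), H.edgeSet.ncard ≤ n → H.Connected →
      ∃ τ, τ ≤ H ∧ τ.Connected ∧ τ.IsAcyclic := by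
  intro n
  induction n using Nat.strong_induction_on with
  | _ n IH =>
    intro H hcard hconn
    by_cases hac : H.IsAcyclic
    · exact ⟨H, le_refl _, hconn, hac⟩
    · rw [SimpleGraph.isAcyclic_iff_forall_edge_isBridge] at hac
      push_neg at hac
      obtain ⟨e, he, hnb⟩ := hac
      induction e using Sym2.ind with
      | _ u v =>
        have hadj : H.Adj u v := he
        rw [SimpleGraph.isBridge_iff] at hnb
        push_neg at hnb
        have hr : (H \ SimpleGraph.fromEdgeSet {s(u, v)}).Reachable u v := hnb
        have hr' : (H.deleteEdges {s(u, v)}).Reachable u v := hr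
        have hconn' := connected_deleteEdges_of_reachable hconn hr'
        have hES : (H.deleteEdges {s(u, v)}).edgeSet = H.edgeSet \ {s(u, v)} := by
          simp [SimpleGraph.edgeSet_deleteEdges]
        have hlt : (H.deleteEdges {s(u, v)}).edgeSet.ncard < n := by
          rw [hES]
          calc (H.edgeSet \ {s(u, v)}).ncard
              < H.edgeSet.ncard := by
                have : H.edgeSet \ {s(u, v)} ⊂ H.edgeSet := by
                  constructor
                  · exact Set.diff_subset
                  · intro hsub
                    exact (hsub he).2 rfl
                exact Set.ncard_lt_ncard this (Set.toFinite _)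
            _ ≤ n := hcard
        obtain ⟨τ, hτle, hτc, hτa⟩ :=
          IH _ hlt (H.deleteEdges {s(u, v)}) le_rfl hconn'
        exact ⟨τ, le_trans hτle (SimpleGraph.deleteEdges_le _), hτc, hτa⟩

lemma exists_spanning_tree {V : Type*} [Fintype V] (H : SimpleGraph V) (h : H.Connected) :
    ∃ τ, τ ≤ H ∧ τ.Connected ∧ τ.IsAcyclic :=
  exists_spanning_tree_aux H.edgeSet.ncard H le_rfl h

/-- Paper's Lemma 2: `R(M)` equals the intersection of `E_P(τ,M)` over all spanning
trees `τ` of the (connected) logical network. -/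
theorem disconnectingLinks_eq_iInter_utilizedLinks
    {V_L E_P : Type*} [Fintype V_L] [Fintype E_P]
    (G_L : SimpleGraph V_L) (hG : G_L.Connected) (M : Sym2 V_L → Set E_P) :
    disconnectingLinks G_L M =
      ⋂ τ, ⋂ (_ : IsSpanningTree G_L τ), utilizedLinks M τ := by
  ext e
  simp only [disconnectingLinks, Set.mem_setOf_eq, Set.mem_iInter]
  constructor
  · -- disconnecting → e used by every spanning tree
    intro hdis τ ⟨hle, hc, ha⟩
    by_contra hnot
    simp only [utilizedLinks, Set.mem_iUnion, not_exists] at hnot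
    apply hdis
    refine hc.mono (fun x y hxy => ?_)
    rw [survivingGraph, SimpleGraph.fromEdgeSet_adj]
    refine ⟨⟨SimpleGraph.edgeSet_mono hle ((SimpleGraph.mem_edgeSet τ).mpr hxy), hnot _ ((SimpleGraph.mem_edgeSet τ).mpr hxy)⟩, hxy.ne⟩
  · -- e used by every spanning tree → disconnecting
    intro hall hconn
    obtain ⟨τ, hle, hc, ha⟩ := exists_spanning_tree _ hconn
    have hleG : survivingGraph G_L M e ≤ G_L := by
      rw [survivingGraph]
      conv_rhs => rw [← SimpleGraph.fromEdgeSet_edgeSet G_L]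
      exact SimpleGraph.fromEdgeSet_mono (fun μ hμ => hμ.1)
    have := hall τ ⟨le_trans hle hleG, hc, ha⟩
    simp only [utilizedLinks, Set.mem_iUnion] at this
    obtain ⟨μ, hμ, heμ⟩ := this
    have hμ' : μ ∈ (survivingGraph G_L M e).edgeSet := SimpleGraph.edgeSet_mono hle hμ
    rw [survivingGraph, SimpleGraph.edgeSet_fromEdgeSet] at hμ'
    exact hμ'.1.2 heμ
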